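/- (Population upper bound on the projected Bellman residual.) In the finite MDP setting, let π : S → A be a deterministic policy with value function Q^π, μ a fully supported probability distribution on S×A, φ : S×A → I a partition function, and f : S×A → ℝ. Let ε_φ = min{∥g − Q^π∥_∞ : g is φ-measurable}. Then ∥f − T_G^π f∥_{2,μ} ≤ (1+γ) ∥f − Q^π∥_∞ + 2 ε_φ. -/

import Mathlib

open Finset

/-- Cellwise `μ`-weighted average over the cells of `φ`. -/
noncomputable def cellAvg {S A I : Type*} [Fintype S] [Fintype A] [DecidableEq I]
    (μ : S × A → ℝ) (φ : S × A → I) (h : S × A → ℝ) (x : S × A) : ℝ :=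
  (∑ y : S × A, if φ y = φ x then μ y * h y else 0) /
  (∑ y : S × A, if φ y = φ x then μ y else 0)

/-- The policy Bellman operator `T^π`. -/
noncomputable def TPol {S A : Type*} [Fintype S] [Fintype A]
    (R : S × A → ℝ) (P : S × A → S → ℝ) (γ : ℝ) (π : S → A)
    (Q : S × A → ℝ) (x : S × A) : ℝ :=
  R x + γ * ∑ s' : S, P x s' * Q (s', π s')

/-- The sup-norm over the finite state-action space. -/
noncomputable def supNorm {S A : Type*} [Fintype S] [Fintype A] [Nonempty S] [Nonempty A]
    (f : S × A → ℝ) : ℝ :=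
  univ.sup' univ_nonempty fun x : S × A => |f x|

/-- The `ν`-weighted `L₂` norm. -/
noncomputable def l2mu {S A : Type*} [Fintype S] [Fintype A]
    (ν : S × A → ℝ) (f : S × A → ℝ) : ℝ :=
  Real.sqrt (∑ x : S × A, ν x * f x ^ 2)

/-- The best approximation error of `Qpi` by `φ`-measurable (piecewise constant)
functions, in sup-norm: `ε_φ = min {‖g − Q^π‖_∞ : g is φ-measurable}`. -/
noncomputable def epsPhi {S A I : Type*} [Fintype S] [Fintype A] [Nonempty S] [Nonempty A]
    (φ : S × A → I) (Qpi : S × A → ℝ) : ℝ :=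
  sInf {t : ℝ | ∃ g : S × A → ℝ,
    (∀ x y, φ x = φ y → g x = g y) ∧ supNorm (fun x => g x - Qpi x) = t}


section Aux
variable {S A I : Type*} [Fintype S] [Fintype A] [Nonempty S] [Nonempty A] [DecidableEq I]

lemma abs_le_supNorm (f : S × A → ℝ) (x : S × A) : |f x| ≤ supNorm f :=
  Finset.le_sup' (fun y => |f y|) (Finset.mem_univ x)

lemma supNorm_nonneg (f : S × A → ℝ) : 0 ≤ supNorm f :=
  le_trans (abs_nonneg _) (abs_le_supNorm f (Classical.arbitrary _))

lemma l2mu_le_of_forall {ν : S × A → ℝ} (hν : ∀ x, 0 ≤ ν x)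
    (hνsum : ∑ x : S × A, ν x = 1) {h : S × A → ℝ} {C : ℝ} (hC : 0 ≤ C)
    (hb : ∀ x, |h x| ≤ C) : l2mu ν h ≤ C := by
  have : ∑ x : S × A, ν x * h x ^ 2 ≤ C ^ 2 := by
    calc ∑ x : S × A, ν x * h x ^ 2 ≤ ∑ x : S × A, ν x * C ^ 2 := by
          apply Finset.sum_le_sum
          intro x _
          have : h x ^ 2 ≤ C ^ 2 := by
            rw [← sq_abs]
            exact pow_le_pow_left₀ (abs_nonneg _) (hb x) 2
          nlinarith [hν x]
      _ = C ^ 2 := by rw [← Finset.sum_mul, hνsum, one_mul]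
  calc l2mu ν h ≤ Real.sqrt (C ^ 2) := Real.sqrt_le_sqrt this
    _ = C := by rw [Real.sqrt_sq hC]

lemma den_pos (μ : S × A → ℝ) (hμpos : ∀ x, 0 < μ x) (φ : S × A → I) (x : S × A) :
    0 < ∑ y : S × A, if φ y = φ x then μ y else 0 := by
  apply Finset.sum_pos' (fun y _ => by split_ifs; exacts [(hμpos y).le, le_rfl])
  exact ⟨x, Finset.mem_univ x, by simp [(hμpos x)]⟩

lemma abs_cellAvg_le (μ : S × A → ℝ) (hμpos : ∀ x, 0 < μ x) (φ : S × A → I)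
    (h : S × A → ℝ) {C : ℝ} (hb : ∀ y, |h y| ≤ C) (x : S × A) :
    |cellAvg μ φ h x| ≤ C := by
  have hd := den_pos μ hμpos φ x
  rw [cellAvg, abs_div, abs_of_pos hd, div_le_iff₀ hd]
  calc |∑ y : S × A, if φ y = φ x then μ y * h y else 0|
      ≤ ∑ y : S × A, |if φ y = φ x then μ y * h y else 0| := Finset.abs_sum_le_sum_abs _ _
    _ ≤ ∑ y : S × A, (if φ y = φ x then μ y else 0) * C := by
        apply Finset.sum_le_sum
        intro y _
        split_ifs
        · rw [abs_mul, abs_of_pos (hμpos y)]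
          exact mul_le_mul_of_nonneg_left (hb y) (hμpos y).le
        · simp
    _ = C * ∑ y : S × A, (if φ y = φ x then μ y else 0) := by
        rw [Finset.mul_sum]; apply Finset.sum_congr rfl; intro y _; ring

lemma cellAvg_sub_meas (μ : S × A → ℝ) (hμpos : ∀ x, 0 < μ x) (φ : S × A → I)
    (g h : S × A → ℝ) (hg : ∀ x y, φ x = φ y → g x = g y) (x : S × A) :
    cellAvg μ φ (fun y => g y - h y) x = g x - cellAvg μ φ h x := by
  have hd := den_pos μ hμpos φ x
  have hnum : (∑ y : S × A, if φ y = φ x then μ y * (g y - h y) else 0)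
      = g x * (∑ y : S × A, if φ y = φ x then μ y else 0)
        - ∑ y : S × A, (if φ y = φ x then μ y * h y else 0) := by
    rw [Finset.mul_sum, ← Finset.sum_sub_distrib]
    apply Finset.sum_congr rfl
    intro y _
    split_ifs with hc
    · rw [hg y x hc]; ring
    · ring
  rw [cellAvg, cellAvg, hnum, sub_div, mul_div_cancel_right₀ _ hd.ne']

end Aux

/-- population upper bound on the projected Bellman residual:
`‖f − T_G^π f‖₂,μ ≤ (1+γ)‖f − Q^π‖_∞ + 2 ε_φ`. -/
theorem stmt_11 {S A I : Type*} [Fintype S] [Fintype A] [Nonempty S] [Nonempty A]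
    [DecidableEq I]
    (Rmax : ℝ) (R : S × A → ℝ) (hR : ∀ x, 0 ≤ R x ∧ R x ≤ Rmax)
    (P : S × A → S → ℝ) (hP0 : ∀ x s', 0 ≤ P x s') (hP1 : ∀ x, ∑ s' : S, P x s' = 1)
    (γ : ℝ) (hγ0 : 0 ≤ γ) (hγ1 : γ < 1)
    (π : S → A)
    (Qpi : S × A → ℝ) (hQpi : TPol R P γ π Qpi = Qpi)
    (μ : S × A → ℝ) (hμpos : ∀ x, 0 < μ x) (hμsum : ∑ x : S × A, μ x = 1)
    (φ : S × A → I) (f : S × A → ℝ) :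
    l2mu μ (fun x => f x - cellAvg μ φ (TPol R P γ π f) x) ≤
      (1 + γ) * supNorm (fun x => f x - Qpi x) + 2 * epsPhi φ Qpi := by
  set e := supNorm (fun x => f x - Qpi x) with he
  have he0 : 0 ≤ e := supNorm_nonneg _
  -- contraction bound
  have hT : ∀ x, |TPol R P γ π f x - Qpi x| ≤ γ * e := by
    intro x
    have h5 : TPol R P γ π f x - TPol R P γ π Qpi x
        = γ * ∑ s' : S, P x s' * (f (s', π s') - Qpi (s', π s')) := by
      simp only [TPol, Finset.mul_sum]
      rw [add_sub_add_left_eq_sub, ← Finset.sum_sub_distrib]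
      apply Finset.sum_congr rfl
      intro s' _
      ring
    rw [hQpi] at h5
    rw [h5, abs_mul, abs_of_nonneg hγ0]
    apply mul_le_mul_of_nonneg_left _ hγ0
    calc |∑ s' : S, P x s' * (f (s', π s') - Qpi (s', π s'))|
        ≤ ∑ s' : S, |P x s' * (f (s', π s') - Qpi (s', π s'))| :=
          Finset.abs_sum_le_sum_abs _ _
      _ ≤ ∑ s' : S, P x s' * e := by
          apply Finset.sum_le_sum
          intro s' _
          rw [abs_mul, abs_of_nonneg (hP0 x s')]
          exact mul_le_mul_of_nonneg_left (abs_le_supNorm (fun y => f y - Qpi y) _) (hP0 x s')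
      _ = e := by rw [← Finset.sum_mul, hP1, one_mul]
  -- main bound for each measurable g
  have key : ∀ t ∈ {t : ℝ | ∃ g : S × A → ℝ,
      (∀ x y, φ x = φ y → g x = g y) ∧ supNorm (fun x => g x - Qpi x) = t},
      l2mu μ (fun x => f x - cellAvg μ φ (TPol R P γ π f) x) ≤ (1 + γ) * e + 2 * t := by
    rintro t ⟨g, hg, rfl⟩
    set s := supNorm (fun x => g x - Qpi x) with hs
    have hs0 : 0 ≤ s := supNorm_nonneg _
    apply l2mu_le_of_forall (fun x => (hμpos x).le) hμsum (by nlinarith)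
    intro x
    have h1 : |g x - cellAvg μ φ (TPol R P γ π f) x| ≤ s + γ * e := by
      rw [← cellAvg_sub_meas μ hμpos φ g (TPol R P γ π f) hg x]
      apply abs_cellAvg_le μ hμpos φ _ _ x
      intro y
      calc |g y - TPol R P γ π f y|
          ≤ |g y - Qpi y| + |TPol R P γ π f y - Qpi y| := by
            have : g y - TPol R P γ π f y = (g y - Qpi y) - (TPol R P γ π f y - Qpi y) := by ring
            rw [this]; exact abs_sub (g y - Qpi y) (TPol R P γ π f y - Qpi y)
        _ ≤ s + γ * e := add_le_add (abs_le_supNorm (fun z => g z - Qpi z) y) (hT y)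
    have h2 : |f x - Qpi x| ≤ e := abs_le_supNorm (fun z => f z - Qpi z) x
    have h3 : |Qpi x - g x| ≤ s := by
      rw [abs_sub_comm]; exact abs_le_supNorm (fun z => g z - Qpi z) x
    calc |f x - cellAvg μ φ (TPol R P γ π f) x|
        = |(f x - Qpi x) + (Qpi x - g x) + (g x - cellAvg μ φ (TPol R P γ π f) x)| := by
          ring_nf
      _ ≤ |f x - Qpi x| + |Qpi x - g x| + |g x - cellAvg μ φ (TPol R P γ π f) x| :=
          (abs_add_le _ _).trans (add_le_add_left (abs_add_le _ _) _)
      _ ≤ e + s + (s + γ * e) := by exact add_le_add (add_le_add h2 h3) h1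
      _ ≤ (1 + γ) * e + 2 * s := by ring_nf; linarith
  -- pass to the infimum
  have hne : {t : ℝ | ∃ g : S × A → ℝ,
      (∀ x y, φ x = φ y → g x = g y) ∧ supNorm (fun x => g x - Qpi x) = t}.Nonempty :=
    ⟨supNorm (fun x => (0 : ℝ) - Qpi x), fun _ => 0, fun _ _ _ => rfl, rfl⟩
  have hEps : (l2mu μ (fun x => f x - cellAvg μ φ (TPol R P γ π f) x) - (1 + γ) * e) / 2
      ≤ epsPhi φ Qpi := by
    apply le_csInf hne
    intro t ht
    have := key t ht
    linarith
  linarith
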